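/- Let θ ∈ (0, π/2], φ = arctan(1/sin θ), ψ₁ = π/2 − φ, ψ₂ = π/2 + φ, p_max = 1/2 + √(1 + sin²θ)/4, let ε > 0, let n, r be natural numbers with 0 < r ≤ n, and let ε'_A ∈ [0, 1/2]. Define p'' = 1/2 + (1/8) sin θ (sin ψ₁ + sin ψ₂) + (1/4) √(1/4 − ε'_A²) (cos ψ₁ − cos ψ₂) + (1/4) ε'_A cos θ (cos ψ₁ + cos ψ₂). If the averaged success probability ((n − r)·p_max + r·p'')/n is at least p_max − ε·p_max, then ε'_A ≤ √(2 n ε p_max / (r cos ψ₁)). -/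

import Mathlib

set_option maxHeartbeats 1600000 in
theorem stmt_8 (θ : ℝ) (hθ : θ ∈ Set.Ioc 0 (Real.pi / 2))
    (φ ψ₁ ψ₂ pmax : ℝ)
    (hφ : φ = Real.arctan (1 / Real.sin θ))
    (hψ₁ : ψ₁ = Real.pi / 2 - φ) (hψ₂ : ψ₂ = Real.pi / 2 + φ)
    (hpmax : pmax = 1 / 2 + Real.sqrt (1 + Real.sin θ ^ 2) / 4)
    (ε : ℝ) (hε : 0 < ε) (n r : ℕ) (hr : 0 < r) (hrn : r ≤ n)
    (εA' : ℝ) (hεA' : εA' ∈ Set.Icc (0 : ℝ) (1 / 2))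
    (p'' : ℝ)
    (hp'' : p'' = 1 / 2 + (1 / 8) * Real.sin θ * (Real.sin ψ₁ + Real.sin ψ₂)
        + (1 / 4) * Real.sqrt (1 / 4 - εA' ^ 2) * (Real.cos ψ₁ - Real.cos ψ₂)
        + (1 / 4) * εA' * Real.cos θ * (Real.cos ψ₁ + Real.cos ψ₂))
    (h : ((n - r : ℝ) * pmax + r * p'') / n ≥ pmax - ε * pmax) :
    εA' ≤ Real.sqrt (2 * n * ε * pmax / (r * Real.cos ψ₁)) := by
  obtain ⟨hθ0, hθ2⟩ := hθ
  obtain ⟨hA0, hA2⟩ := hεA'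
  have hs : 0 < Real.sin θ :=
    Real.sin_pos_of_pos_of_lt_pi hθ0 (by linarith [Real.pi_pos])
  set t := Real.sin θ with ht
  clear_value t
  have hs2 : (0:ℝ) < 1 + t ^ 2 := by positivity
  set s := Real.sqrt (1 + t ^ 2) with hsdef
  have hspos : 0 < s := Real.sqrt_pos.mpr hs2
  have hssq : s ^ 2 = 1 + t ^ 2 := Real.sq_sqrt hs2.le
  clear_value s
  have hst : Real.sqrt (1 + (1 / t) ^ 2) = s / t := by
    rw [show 1 + (1 / t) ^ 2 = (1 + t ^ 2) / t ^ 2 by field_simp; ring,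
      Real.sqrt_div hs2.le, Real.sqrt_sq hs.le, hsdef]
  have hsinφ : Real.sin φ = 1 / s := by
    rw [hφ, Real.sin_arctan, hst]
    field_simp
  have hcosφ : Real.cos φ = t / s := by
    rw [hφ, Real.cos_arctan, hst]
    field_simp
  have hc1 : Real.cos ψ₁ = 1 / s := by
    rw [hψ₁, Real.cos_pi_div_two_sub, hsinφ]
  have hc2 : Real.cos ψ₂ = -(1 / s) := by
    rw [hψ₂, Real.cos_add, Real.cos_pi_div_two, Real.sin_pi_div_two, hsinφ]; ring
  have hs1 : Real.sin ψ₁ = t / s := by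
    rw [hψ₁, Real.sin_pi_div_two_sub, hcosφ]
  have hs2' : Real.sin ψ₂ = t / s := by
    rw [hψ₂, Real.sin_add, Real.cos_pi_div_two, Real.sin_pi_div_two, hcosφ]; ring
  set q := Real.sqrt (1 / 4 - εA' ^ 2) with hq
  have hq0 : 0 ≤ q := Real.sqrt_nonneg _
  clear_value q
  have hqle : q ≤ 1 / 2 - εA' ^ 2 := by
    rw [hq]
    have h1 : Real.sqrt (1 / 4 - εA' ^ 2) ≤ Real.sqrt ((1 / 2 - εA' ^ 2) ^ 2) :=
      Real.sqrt_le_sqrt (by nlinarith)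
    rwa [Real.sqrt_sq (by nlinarith)] at h1
  -- rewrite p''
  have hp2 : p'' = 1 / 2 + (1 / 4) * t * (t / s) + (1 / 2) * q * (1 / s) := by
    rw [hp'', hc1, hc2, hs1, hs2']; ring
  -- pmax - p'' ≥ εA'^2 / (2 s)
  have hgap : εA' ^ 2 / (2 * s) ≤ pmax - p'' := by
    have heq : pmax - p'' = (1 / 4 - q / 2) / s := by
      rw [hp2, hpmax, eq_div_iff hspos.ne']
      field_simp
      linear_combination 2 * hssq
    rw [heq, show εA' ^ 2 / (2 * s) = (εA' ^ 2 / 2) / s by ring,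
      div_le_div_iff_of_pos_right hspos]
    linarith
  have hn : (0:ℝ) < n := by
    exact_mod_cast Nat.lt_of_lt_of_le hr hrn
  have hrpos : (0:ℝ) < r := by exact_mod_cast hr
  rw [ge_iff_le, le_div_iff₀ hn] at h
  have hkey : (r:ℝ) * (pmax - p'') ≤ n * ε * pmax := by nlinarith
  have hpmaxpos : 0 < pmax := by
    rw [hpmax]; linarith
  have hsq : εA' ^ 2 ≤ 2 * n * ε * pmax / (r * Real.cos ψ₁) := by
    rw [hc1, le_div_iff₀ (mul_pos hrpos (one_div_pos.mpr hspos))]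
    have h2 : (r:ℝ) * (εA' ^ 2 / (2 * s)) ≤ n * ε * pmax := by
      calc (r:ℝ) * (εA' ^ 2 / (2 * s)) ≤ r * (pmax - p'') := by
            exact mul_le_mul_of_nonneg_left hgap hrpos.le
        _ ≤ n * ε * pmax := hkey
    rw [show (r:ℝ) * (εA' ^ 2 / (2 * s)) = (r * εA' ^ 2) / (2 * s) by ring,
      div_le_iff₀ (by linarith : (0:ℝ) < 2 * s)] at h2
    rw [show εA' ^ 2 * ((r:ℝ) * (1 / s)) = (r * εA' ^ 2) / s by ring,
      div_le_iff₀ hspos]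
    nlinarith
  calc εA' = Real.sqrt (εA' ^ 2) := (Real.sqrt_sq hA0).symm
    _ ≤ _ := Real.sqrt_le_sqrt hsq
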